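/- Let G = (V,E) be a connected graph and G' = (V,E') a graph with E ⊆ E'. For x ∈ {0,1}^{E'}, the set x^{-1}(1) is a multicut of G' lifted from G (i.e., it equals φ_{G'}(Π) for some decomposition Π of G) if and only if: (1) for every cycle C of G and every e ∈ C, x_e ≤ Σ_{e' ∈ C\{e}} x_{e'}; (2) for every vw ∈ E' \ E and every vw-path P in G, x_{vw} ≤ Σ_{e ∈ P} x_e; and (3) for every vw ∈ E' \ E and every vw-cut C of G, 1 − x_{vw} ≤ Σ_{e ∈ C} (1 − x_e). -/

import Mathlib

open SimpleGraph

variable {V : Type}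

section Defs

variable [Fintype V] [DecidableEq V]

/-- A decomposition of a graph `G`: a partition of the vertex set into
blocks each of which induces a connected subgraph of `G`. -/
def IsDecomposition (G : SimpleGraph V) (P : Set (Set V)) : Prop :=
  (∀ U ∈ P, ∀ W ∈ P, U ≠ W → Disjoint U W) ∧
  (∀ v : V, ∃ U ∈ P, v ∈ U) ∧
  (∀ U ∈ P, (G.induce U).Connected)

/-- An edge `e` straddles distinct blocks of `P` if no block contains both endpoints. -/
def Straddles (P : Set (Set V)) (e : Sym2 V) : Prop := ∀ U ∈ P, ¬ ∀ v ∈ e, v ∈ U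

/-- The set of edges of `G` straddling distinct blocks of `P` (the map `φ_G`). -/
def cutEdges (G : SimpleGraph V) (P : Set (Set V)) : Set (Sym2 V) :=
  {e | e ∈ G.edgeSet ∧ Straddles P e}

/-- A multicut of `G`: a set of edges meeting every cycle of `G` in a number of
edges different from 1. -/
def IsMulticut (G : SimpleGraph V) (M : Set (Sym2 V)) : Prop :=
  M ⊆ G.edgeSet ∧ ∀ ⦃u : V⦄ (c : G.Walk u u), c.IsCycle →
    (M ∩ {e | e ∈ c.edges}).ncard ≠ 1

/-- A multicut of `G'` lifted from `G`. -/
def IsLiftedMulticut (G G' : SimpleGraph V) (M : Set (Sym2 V)) : Prop :=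
  ∃ P : Set (Set V), IsDecomposition G P ∧ M = cutEdges G' P

/-- The closed walk `c` has a chord in the graph `H`: an edge of `H` joining two
vertices of `c` that is not an edge of `c`. -/
def HasChord (H : SimpleGraph V) {G : SimpleGraph V} {u : V} (c : G.Walk u u) : Prop :=
  ∃ e ∈ H.edgeSet, (∀ v ∈ e, v ∈ c.support) ∧ e ∉ c.edges

/-- A `vw`-cut of `G`: a minimal set of edges whose removal disconnects `v` from `w`. -/
def IsCut (G : SimpleGraph V) (v w : V) (C : Finset (Sym2 V)) : Prop :=
  ↑C ⊆ G.edgeSet ∧ ¬ (G.deleteEdges ↑C).Reachable v w ∧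
    ∀ C' : Finset (Sym2 V), C' ⊂ C → (G.deleteEdges ↑C').Reachable v w

/-- The cycle inequalities for cycles of `G`. -/
def CycleIneqs (G : SimpleGraph V) (x : Sym2 V → ℕ) : Prop :=
  ∀ ⦃u : V⦄ (c : G.Walk u u), c.IsCycle → ∀ e ∈ c.edges,
    x e ≤ ∑ e' ∈ c.edges.toFinset.erase e, x e'

/-- The path inequalities for pairs `vw ∈ E' \ E` and `vw`-paths of `G`. -/
def PathIneqs (G G' : SimpleGraph V) (x : Sym2 V → ℕ) : Prop :=
  ∀ v w : V, s(v, w) ∈ G'.edgeSet \ G.edgeSet →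
    ∀ p : G.Walk v w, p.IsPath → x s(v, w) ≤ ∑ e ∈ p.edges.toFinset, x e

/-- The cut inequalities for pairs `vw ∈ E' \ E` and `vw`-cuts of `G`. -/
def CutIneqs (G G' : SimpleGraph V) (x : Sym2 V → ℕ) : Prop :=
  ∀ v w : V, s(v, w) ∈ G'.edgeSet \ G.edgeSet →
    ∀ C : Finset (Sym2 V), IsCut G v w C → 1 - x s(v, w) ≤ ∑ e ∈ C, (1 - x e)

/-- Characteristic vector of an edge set, in `ℝ^{Sym2 V}`. -/
noncomputable def charVec (M : Set (Sym2 V)) : Sym2 V → ℝ :=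
  fun e => by classical exact if e ∈ M then 1 else 0

/-- The characteristic vectors of multicuts of `G'` lifted from `G`
(the vertex set of the lifted multicut polytope `Ξ_{GG'}`). -/
def liftedVectors (G G' : SimpleGraph V) : Set (Sym2 V → ℝ) :=
  {x | ∃ M : Set (Sym2 V), IsLiftedMulticut G G' M ∧ x = charVec M}

/-- The characteristic vectors of multicuts of `G'`. -/
def multicutVectors (G' : SimpleGraph V) : Set (Sym2 V → ℝ) :=
  {x | ∃ M : Set (Sym2 V), IsMulticut G' M ∧ x = charVec M}

/-- The inequality `ineq`, with associated equality `eqn`, defines a facet of the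
lifted multicut polytope `Ξ_{GG'}` (which has dimension `|E'|`): it is valid, and
the face it induces has dimension `|E'| - 1`. -/
def DefinesFacet (G G' : SimpleGraph V) (ineq eqn : (Sym2 V → ℝ) → Prop) : Prop :=
  (∀ x ∈ liftedVectors G G', ineq x) ∧
  Module.finrank ℝ (vectorSpan ℝ {x ∈ liftedVectors G G' | eqn x}) = G'.edgeSet.ncard - 1

/-- Facet-defining for the multicut polytope `Ξ_{G'}`. -/
def DefinesFacetMC (G' : SimpleGraph V) (ineq eqn : (Sym2 V → ℝ) → Prop) : Prop :=
  (∀ x ∈ multicutVectors G', ineq x) ∧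
  Module.finrank ℝ (vectorSpan ℝ {x ∈ multicutVectors G' | eqn x}) = G'.edgeSet.ncard - 1

/-- `u` is a `v`-`w`-cut-vertex: it lies on every `vw`-path of `G`. -/
def IsCutVertex (G : SimpleGraph V) (v w u : V) : Prop :=
  ∀ p : G.Walk v w, p.IsPath → u ∈ p.support

/-- `S` is a `u`-`v`-separating node set of `G`. -/
def IsSeparatingSet (G : SimpleGraph V) (u v : V) (S : Set V) : Prop :=
  u ∉ S ∧ v ∉ S ∧ ∀ p : G.Walk u v, p.IsPath → ∃ s ∈ S, s ∈ p.support

/-- The side of the cut `C` containing `v`. -/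
def vSide (G : SimpleGraph V) (C : Finset (Sym2 V)) (v : V) : Set V :=
  {u | (G.deleteEdges ↑C).Reachable v u}

/-- The component of `G` induced by `U` is properly `(vw,C)`-connected. -/
def ProperlyConnected (G : SimpleGraph V) (v w : V) (C : Finset (Sym2 V)) (U : Set V) : Prop :=
  (G.induce U).Connected ∧ v ∈ U ∧ w ∈ U ∧
    ({e | e ∈ C ∧ ∀ u ∈ e, u ∈ U} : Set (Sym2 V)).ncard = 1

/-- The component of `G` induced by `U` is improperly `(vw,C)`-connected. -/
def ImproperlyConnected (G : SimpleGraph V) (v w : V) (C : Finset (Sym2 V)) (U : Set V) : Prop :=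
  (G.induce U).Connected ∧ (U ⊆ vSide G C v ∨ U ⊆ vSide G C w)

/-- `(vw,C)`-connected: properly or improperly so. -/
def VWCConnected (G : SimpleGraph V) (v w : V) (C : Finset (Sym2 V)) (U : Set V) : Prop :=
  ProperlyConnected G v w C U ∨ ImproperlyConnected G v w C U

/-- The vertex set of the maximal component of `H` containing `u`. -/
def compSupp (H : SimpleGraph V) (u : V) : Set V := {u' | H.Reachable u u'}

end Defs

set_option linter.unusedSectionVars false

section H
variable [Fintype V] [DecidableEq V] {G : SimpleGraph V}

def PRel (P : Set (Set V)) (a b : V) : Prop := ∃ U ∈ P, a ∈ U ∧ b ∈ U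

lemma prel_trans {P : Set (Set V)}
    (hd : ∀ U ∈ P, ∀ W ∈ P, U ≠ W → Disjoint U W) {a b c : V}
    (h1 : PRel P a b) (h2 : PRel P b c) : PRel P a c := by
  obtain ⟨U, hU, haU, hbU⟩ := h1
  obtain ⟨W, hW, hbW, hcW⟩ := h2
  have hUW : U = W := by
    by_contra hne
    exact Set.disjoint_left.mp (hd U hU W hW hne) hbU hbW
  exact ⟨U, hU, haU, hUW ▸ hcW⟩

lemma not_straddles_iff {P : Set (Set V)} {e : Sym2 V} :
    ¬ Straddles P e ↔ ∃ U ∈ P, ∀ v ∈ e, v ∈ U := by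
  rw [Straddles]; push_neg; rfl

lemma walk_prel {P : Set (Set V)}
    (hd : ∀ U ∈ P, ∀ W ∈ P, U ≠ W → Disjoint U W)
    (hc : ∀ v : V, ∃ U ∈ P, v ∈ U)
    {a b : V} (p : G.Walk a b)
    (h : ∀ f ∈ p.edges, ¬ Straddles P f) : PRel P a b := by
  induction p with
  | nil => obtain ⟨U, hU, haU⟩ := hc _; exact ⟨U, hU, haU, haU⟩
  | @cons a c b h' p ih =>
    have h1 : ¬ Straddles P s(a, c) := h s(a, c) (by
      rw [Walk.edges_cons]; exact List.mem_cons_self)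
    obtain ⟨U, hU, hall⟩ := not_straddles_iff.mp h1
    refine prel_trans hd ⟨U, hU, hall a (Sym2.mem_mk_left a c),
      hall c (Sym2.mem_mk_right a c)⟩ ?_
    exact ih (fun f hf => h f (by simp [hf]))

lemma walk_split {u v a b : V} (p : G.Walk u v) (he : s(a, b) ∈ p.edges)
    (hnd : p.edges.Nodup) :
    ∃ (c d : V) (_ : s(c, d) = s(a, b)) (q : G.Walk u c) (r : G.Walk d v),
      s(a, b) ∉ q.edges ∧ s(a, b) ∉ r.edges ∧
      (∀ f ∈ q.edges, f ∈ p.edges) ∧ (∀ f ∈ r.edges, f ∈ p.edges) := by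
  induction p with
  | nil => simp at he
  | @cons u w v h' p ih =>
    rw [Walk.edges_cons, List.mem_cons] at he
    rw [Walk.edges_cons, List.nodup_cons] at hnd
    rcases he with he | he
    · exact ⟨u, w, he.symm, Walk.nil, p, by simp, he ▸ hnd.1, by simp,
        fun f hf => by simp [hf]⟩
    · obtain ⟨c, d, hcd, q, r, h1, h2, h3, h4⟩ := ih he hnd.2
      refine ⟨c, d, hcd, Walk.cons h' q, r, ?_, h2,
        ?_, fun f hf => by simp [h4 f hf]⟩
      · rw [Walk.edges_cons, List.mem_cons]
        rintro (h | h)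
        · exact hnd.1 (h ▸ he)
        · exact h1 h
      · intro f hf
        rw [Walk.edges_cons, List.mem_cons] at hf
        rcases hf with rfl | hf
        · simp
        · simp [h3 f hf]

lemma cycle_exists_avoid {u a b : V} (c : G.Walk u u) (hc : c.IsCycle)
    (he : s(a, b) ∈ c.edges) :
    ∃ w : G.Walk a b, s(a, b) ∉ w.edges ∧ ∀ f ∈ w.edges, f ∈ c.edges := by
  obtain ⟨c', d', hcd, q, r, h1, h2, h3, h4⟩ := walk_split c he hc.edges_nodup
  rcases Sym2.eq_iff.mp hcd with ⟨rfl, rfl⟩ | ⟨rfl, rfl⟩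
  · refine ⟨(r.append q).reverse, ?_, ?_⟩
    · simp only [Walk.edges_reverse, List.mem_reverse, Walk.edges_append, List.mem_append]
      rintro (h | h) <;> [exact h2 h; exact h1 h]
    · intro f hf
      simp only [Walk.edges_reverse, List.mem_reverse, Walk.edges_append,
        List.mem_append] at hf
      rcases hf with h | h <;> [exact h4 f h; exact h3 f h]
  · refine ⟨r.append q, ?_, ?_⟩
    · simp only [Walk.edges_append, List.mem_append]
      rintro (h | h) <;> [exact h2 h; exact h1 h]
    · intro f hf
      simp only [Walk.edges_append, List.mem_append] at hf
      rcases hf with h | h <;> [exact h4 f h; exact h3 f h]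

lemma induce_reachable {H : SimpleGraph V} (hle : H ≤ G) {U : Set V}
    {a b : V} (p : H.Walk a b) (hsupp : ∀ v ∈ p.support, v ∈ U)
    (ha : a ∈ U) (hb : b ∈ U) :
    (G.induce U).Reachable ⟨a, ha⟩ ⟨b, hb⟩ := by
  induction p with
  | nil => exact Reachable.refl _
  | @cons a c b h' p ih =>
    have hcU : c ∈ U := hsupp c (by simp)
    have hadj : (G.induce U).Adj ⟨a, ha⟩ ⟨c, hcU⟩ := hle h'
    exact hadj.reachable.trans (ih (fun v hv => hsupp v (by simp [hv])) hcU hb)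

lemma of_induce_walk {U : Set V} {a b : U} (p : (G.induce U).Walk a b) :
    ∃ q : G.Walk a b, ∀ v ∈ q.support, v ∈ U := by
  induction p with
  | nil => exact ⟨Walk.nil, by simp⟩
  | @cons a c b h p ih =>
    obtain ⟨q, hq⟩ := ih
    refine ⟨Walk.cons (show G.Adj (a : V) (c : V) from h) q, ?_⟩
    intro v hv
    rw [Walk.support_cons, List.mem_cons] at hv
    rcases hv with rfl | hv
    · exact a.2
    · exact hq v hv

lemma exists_min_cut {a b : V} (D : Finset (Sym2 V)) (hD : ↑D ⊆ G.edgeSet)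
    (hnr : ¬ (G.deleteEdges ↑D).Reachable a b) :
    ∃ C : Finset (Sym2 V), C ⊆ D ∧ IsCut G a b C := by
  classical
  obtain ⟨C, hCmem, hCmin⟩ := Finset.exists_min_image
    (D.powerset.filter (fun C : Finset (Sym2 V) => ¬ (G.deleteEdges ↑C).Reachable a b))
    (fun C => C.card) ⟨D, by simp [hnr]⟩
  simp only [Finset.mem_filter, Finset.mem_powerset] at hCmem
  refine ⟨C, hCmem.1, fun e heC => hD (Finset.coe_subset.mpr hCmem.1 heC), hCmem.2, ?_⟩
  intro C' hlt
  by_contra hnr'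
  have hmem : C' ∈ D.powerset.filter (fun C : Finset (Sym2 V) => ¬ (G.deleteEdges ↑C).Reachable a b) := by
    simp only [Finset.mem_filter, Finset.mem_powerset]
    exact ⟨hlt.subset.trans hCmem.1, hnr'⟩
  exact absurd (Finset.card_lt_card hlt) (not_lt.mpr (hCmin C' hmem))

lemma edges_mapLe {H K : SimpleGraph V} (h : H ≤ K) {u v : V} (p : H.Walk u v) :
    (p.mapLe h).edges = p.edges := by
  induction p with
  | nil => rfl
  | cons h' p ih =>
    rw [Walk.mapLe] at ih ⊢
    rw [Walk.map_cons, Walk.edges_cons, Walk.edges_cons, ih]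
    rfl

lemma mem_support_of_mem_edges' {u v : V} {q : G.Walk u v} {f : Sym2 V}
    (hf : f ∈ q.edges) : ∀ z ∈ f, z ∈ q.support := by
  induction f using Sym2.ind with
  | _ a b =>
    intro z hz
    rcases Sym2.mem_iff.mp hz with rfl | rfl
    · exact q.fst_mem_support_of_mem_edges hf
    · exact q.snd_mem_support_of_mem_edges hf

end H

/-- For connected `G` and `G' ⊇ G`, `x⁻¹(1)` is a multicut of `G'`
lifted from `G` iff `x` satisfies the cycle, path and cut inequalities. -/
theorem lifted_multicut_iff_inequalities [Fintype V] [DecidableEq V]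
    (G G' : SimpleGraph V) (hG : G.Connected) (hle : G ≤ G')
    (x : Sym2 V → ℕ) (h01 : ∀ e, x e = 0 ∨ x e = 1)
    (hsupp : ∀ e ∉ G'.edgeSet, x e = 0) :
    IsLiftedMulticut G G' {e | x e = 1} ↔
      (CycleIneqs G x ∧ PathIneqs G G' x ∧ CutIneqs G G' x) := by
  classical
  constructor
  · rintro ⟨P, ⟨hd, hc, hconn⟩, hM⟩
    have xmem : ∀ e : Sym2 V, x e = 1 ↔ e ∈ cutEdges G' P := fun e => Set.ext_iff.mp hM e
    have hnotprel : ∀ a b : V, Straddles P s(a, b) → ¬ PRel P a b := by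
      rintro a b hstr ⟨U, hU, haU, hbU⟩
      exact hstr U hU (fun z hz => by
        rcases Sym2.mem_iff.mp hz with rfl | rfl <;> assumption)
    refine ⟨?_, ?_, ?_⟩
    · -- CycleIneqs
      intro u c hcy e he
      revert he
      induction e using Sym2.ind with
      | _ a b =>
      intro he
      rcases h01 s(a, b) with h0 | h1
      · rw [h0]; exact Nat.zero_le _
      have hstr : Straddles P s(a, b) := ((xmem _).mp h1).2
      obtain ⟨w, hwe, hwsub⟩ := cycle_exists_avoid c hcy he
      have hex : ∃ f ∈ w.edges, Straddles P f := by
        by_contra hcon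
        push_neg at hcon
        exact hnotprel a b hstr (walk_prel hd hc w hcon)
      obtain ⟨f, hfw, hfstr⟩ := hex
      have hfx : x f = 1 := (xmem f).mpr
        ⟨edgeSet_mono hle (w.edges_subset_edgeSet hfw), hfstr⟩
      have hfmem : f ∈ c.edges.toFinset.erase s(a, b) :=
        Finset.mem_erase.mpr ⟨fun h => hwe (h ▸ hfw), List.mem_toFinset.mpr (hwsub f hfw)⟩
      calc x s(a, b) = x f := by rw [h1, hfx]
        _ ≤ _ := Finset.single_le_sum (fun i _ => Nat.zero_le _) hfmem
    · -- PathIneqs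
      intro v w hvw p hp
      rcases h01 s(v, w) with h0 | h1
      · rw [h0]; exact Nat.zero_le _
      have hstr : Straddles P s(v, w) := ((xmem _).mp h1).2
      have hex : ∃ f ∈ p.edges, Straddles P f := by
        by_contra hcon
        push_neg at hcon
        exact hnotprel v w hstr (walk_prel hd hc p hcon)
      obtain ⟨f, hfp, hfstr⟩ := hex
      have hfx : x f = 1 := (xmem f).mpr
        ⟨edgeSet_mono hle (p.edges_subset_edgeSet hfp), hfstr⟩
      rw [h1, ← hfx]
      exact Finset.single_le_sum (fun i _ => Nat.zero_le _) (List.mem_toFinset.mpr hfp)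
    · -- CutIneqs
      intro v w hvw C hC
      rcases h01 s(v, w) with h0 | h1
      swap
      · rw [h1]; simp
      rw [h0]
      have hnot : ¬ Straddles P s(v, w) := by
        intro hstr
        have : x s(v, w) = 1 := (xmem _).mpr ⟨hvw.1, hstr⟩
        omega
      obtain ⟨U, hU, hall⟩ := not_straddles_iff.mp hnot
      have hvU : v ∈ U := hall v (Sym2.mem_mk_left _ _)
      have hwU : w ∈ U := hall w (Sym2.mem_mk_right _ _)
      obtain ⟨pU⟩ := (hconn U hU) ⟨v, hvU⟩ ⟨w, hwU⟩
      obtain ⟨q, hqsupp⟩ := of_induce_walk pU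
      have hex : ∃ f ∈ q.edges, f ∈ (↑C : Set (Sym2 V)) := by
        by_contra hcon
        push_neg at hcon
        exact hC.2.1 ⟨q.toDeleteEdges ↑C hcon⟩
      obtain ⟨f, hfq, hfC⟩ := hex
      have hfx : x f = 0 := by
        rcases h01 f with h | h
        · exact h
        exfalso
        have hstr : Straddles P f := ((xmem f).mp h).2
        exact hstr U hU (fun z hz => hqsupp z (mem_support_of_mem_edges' hfq z hz))
      have h1f : 1 - x f = 1 := by rw [hfx]
      calc (1 : ℕ) - 0 = 1 - x f := by rw [h1f]
        _ ≤ _ := Finset.single_le_sum (f := fun e => 1 - x e) (fun i _ => Nat.zero_le _) (show f ∈ C from hfC)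
  · rintro ⟨hcyci, hpathi, hcuti⟩
    set M : Set (Sym2 V) := {e | x e = 1} with hMdef
    set G0 := G.deleteEdges M with hG0
    have hle0 : G0 ≤ G := SimpleGraph.deleteEdges_le _
    have hx0 : ∀ {a b : V} (p : G0.Walk a b), ∀ f ∈ p.edges, x f = 0 := by
      intro a b p f hf
      have hmem : f ∈ G0.edgeSet := p.edges_subset_edgeSet hf
      rw [hG0, edgeSet_deleteEdges] at hmem
      rcases h01 f with h | h
      · exact h
      · exact absurd h hmem.2
    have hpath0 : ∀ {a b : V}, G0.Reachable a b →
        ∃ q : G.Walk a b, q.IsPath ∧ ∀ f ∈ q.edges, x f = 0 := by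
      intro a b hr
      obtain ⟨p0⟩ := hr
      refine ⟨(p0.mapLe hle0).bypass, Walk.bypass_isPath _, ?_⟩
      intro f hf
      have hf' : f ∈ (p0.mapLe hle0).edges := Walk.edges_bypass_subset _ hf
      have heq : (p0.mapLe hle0).edges = p0.edges := edges_mapLe hle0 p0
      exact hx0 p0 f (heq ▸ hf')
    refine ⟨Set.range (compSupp G0), ⟨?_, ?_, ?_⟩, ?_⟩
    · rintro U ⟨z1, rfl⟩ W ⟨z2, rfl⟩ hne
      rw [Set.disjoint_left]
      intro t ht1 ht2
      apply hne
      have h1 : G0.Reachable z1 t := ht1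
      have h2 : G0.Reachable z2 t := ht2
      ext u
      exact ⟨fun h => h2.trans (h1.symm.trans h), fun h => h1.trans (h2.symm.trans h)⟩
    · intro v
      exact ⟨compSupp G0 v, ⟨v, rfl⟩, Reachable.refl v⟩
    · rintro U ⟨z, rfl⟩
      have hne : Nonempty (compSupp G0 z) := ⟨⟨z, Reachable.refl z⟩⟩
      refine ⟨fun a b => ?_⟩
      obtain ⟨a, ha⟩ := a
      obtain ⟨b, hb⟩ := b
      have hra : G0.Reachable z a := ha
      have hrb : G0.Reachable z b := hb
      obtain ⟨p⟩ := hra.symm.trans hrb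
      refine induce_reachable hle0 p ?_ ha hb
      intro v hv
      exact hra.trans ⟨p.takeUntil v hv⟩
    · ext e
      revert e
      intro e
      induction e using Sym2.ind with
      | _ a b =>
      simp only [hMdef, Set.mem_setOf_eq, cutEdges]
      constructor
      · intro h1
        have heG' : s(a, b) ∈ G'.edgeSet := by
          by_contra hmem
          rw [hsupp _ hmem] at h1
          omega
        refine ⟨heG', ?_⟩
        intro U hU hall
        obtain ⟨z, rfl⟩ := hU
        have hra : G0.Reachable z a := hall a (Sym2.mem_mk_left _ _)
        have hrb : G0.Reachable z b := hall b (Sym2.mem_mk_right _ _)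
        obtain ⟨q, hqp, hq0⟩ := hpath0 (hra.symm.trans hrb)
        by_cases heG : s(a, b) ∈ G.edgeSet
        · by_cases hin : s(a, b) ∈ q.edges
          · have := hq0 _ hin
            omega
          · have hadj : G.Adj a b := G.mem_edgeSet.mp heG
            have hcycw : (Walk.cons hadj q.reverse).IsCycle := by
              rw [Walk.cons_isCycle_iff]
              exact ⟨hqp.reverse, by simpa [Walk.edges_reverse] using hin⟩
            have hbound := hcyci (Walk.cons hadj q.reverse) hcycw s(a, b) (by simp)
            have hz : ∑ e' ∈ (Walk.cons hadj q.reverse).edges.toFinset.erase s(a, b),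
                x e' = 0 := by
              apply Finset.sum_eq_zero
              intro f hf
              rw [Finset.mem_erase, List.mem_toFinset, Walk.edges_cons, List.mem_cons] at hf
              rcases hf.2 with h | h
              · exact absurd h hf.1
              · exact hq0 f (by simpa [Walk.edges_reverse] using h)
            rw [hz] at hbound
            omega
        · have hbound := hpathi a b ⟨heG', heG⟩ q hqp
          have hz : ∑ f ∈ q.edges.toFinset, x f = 0 :=
            Finset.sum_eq_zero (fun f hf => hq0 f (List.mem_toFinset.mp hf))
          rw [hz] at hbound
          omega
      · rintro ⟨heG', hstr⟩
        rcases h01 s(a, b) with h0 | h1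
        swap
        · exact h1
        exfalso
        have hreach : G0.Reachable a b := by
          by_cases heG : s(a, b) ∈ G.edgeSet
          · refine Adj.reachable ?_
            rw [hG0, deleteEdges_adj]
            refine ⟨G.mem_edgeSet.mp heG, fun hM' => ?_⟩
            have : x s(a, b) = 1 := hM'
            omega
          · by_contra hnr
            have hDfin : (M ∩ G.edgeSet).Finite := Set.toFinite _
            set D := hDfin.toFinset with hD
            have hDcoe : (↑D : Set (Sym2 V)) = M ∩ G.edgeSet := Set.Finite.coe_toFinset _
            have hGeq : G.deleteEdges ↑D = G.deleteEdges M := by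
              rw [hDcoe]
              ext u v
              simp only [deleteEdges_adj, Set.mem_inter_iff, mem_edgeSet]
              tauto
            obtain ⟨C, hCD, hCcut⟩ := exists_min_cut D
              (by rw [hDcoe]; exact Set.inter_subset_right)
              (by rw [hGeq]; exact hnr)
            have hb := hcuti a b ⟨heG', heG⟩ C hCcut
            rw [h0] at hb
            have hzero : ∑ f ∈ C, (1 - x f) = 0 := by
              apply Finset.sum_eq_zero
              intro f hf
              have hfM : f ∈ M := by
                have := (Finset.coe_subset.mpr hCD) (Finset.mem_coe.mpr hf)
                rw [hDcoe] at this
                exact this.1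
              have : x f = 1 := hfM
              omega
            rw [hzero] at hb
            omega
        exact hstr (compSupp G0 a) ⟨a, rfl⟩ (fun z hz => by
          rcases Sym2.mem_iff.mp hz with rfl | rfl
          · exact Reachable.refl _
          · exact hreach)
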